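/- Let V = (V_k, V_k^⊥) be an n×n orthogonal matrix with V_k having k columns, and let Δ ∈ ℝ^{(n-k)×k}. Define Ẑ = (V_k + V_k^⊥ Δ)(I + ΔᵀΔ)^{-1/2}. Then Ẑ has orthonormal columns and ‖(V_k^⊥)ᵀ Ẑ‖₂ = ‖Δ‖₂ / √(1 + ‖Δ‖₂²). -/

import Mathlib

open Matrix
open scoped Matrix.Norms.L2Operator

lemma euc_norm_eq {k : ℕ} (v : EuclideanSpace ℝ (Fin k)) :
    ‖v‖ = Real.sqrt (∑ i, (v i)^2) := by
  rw [EuclideanSpace.norm_eq]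
  congr 1
  refine Finset.sum_congr rfl fun i _ => ?_
  rw [Real.norm_eq_abs, sq_abs]

lemma diag_norm_le {k : ℕ} (d : Fin k → ℝ) {c : ℝ} (hc : 0 ≤ c) (h : ∀ i, |d i| ≤ c) :
    ‖Matrix.diagonal d‖ ≤ c := by
  rw [Matrix.l2_opNorm_def]
  refine ContinuousLinearMap.opNorm_le_bound _ hc fun x => ?_
  show ‖Matrix.toEuclideanLin (Matrix.diagonal d) x‖ ≤ c * ‖x‖
  rw [Matrix.toEuclideanLin_apply]
  rw [euc_norm_eq, euc_norm_eq]
  have hptw : ∀ j : Fin k, ((WithLp.equiv 2 (Fin k → ℝ)).symm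
      (Matrix.diagonal d *ᵥ (WithLp.equiv 2 (Fin k → ℝ)) x) j)^2 = (d j * x j)^2 := by
    intro j
    show ((Matrix.diagonal d *ᵥ (WithLp.equiv 2 (Fin k → ℝ)) x) j)^2 = _
    rw [Matrix.mulVec_diagonal]
    rfl
  calc Real.sqrt (∑ i, ((WithLp.equiv 2 (Fin k → ℝ)).symm
      (Matrix.diagonal d *ᵥ (WithLp.equiv 2 (Fin k → ℝ)) x) i)^2)
      = Real.sqrt (∑ i, (d i * x i)^2) := by
        congr 1; exact Finset.sum_congr rfl fun i _ => hptw i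
    _ ≤ Real.sqrt (∑ i, c^2 * (x i)^2) := by
        apply Real.sqrt_le_sqrt
        refine Finset.sum_le_sum fun i _ => ?_
        rw [mul_pow]
        have h2 : (d i)^2 ≤ c^2 := by
          have := abs_le.mp (h i)
          nlinarith
        exact mul_le_mul_of_nonneg_right h2 (sq_nonneg _)
    _ = c * Real.sqrt (∑ i, (x i)^2) := by
        rw [← Finset.mul_sum, Real.sqrt_mul (by positivity), Real.sqrt_sq hc]

lemma diag_norm_ge {k : ℕ} (d : Fin k → ℝ) (i : Fin k) : |d i| ≤ ‖Matrix.diagonal d‖ := by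
  have hle := Matrix.l2_opNorm_mulVec (Matrix.diagonal d) (EuclideanSpace.single i (1:ℝ))
  have hv : (EuclideanSpace.equiv (Fin k) ℝ).symm ((Matrix.diagonal d) *ᵥ (EuclideanSpace.single i (1:ℝ)))
      = EuclideanSpace.single i (d i) := by
    ext j
    show (Matrix.diagonal d *ᵥ (EuclideanSpace.single i (1:ℝ) : Fin k → ℝ)) j = _
    rw [Matrix.mulVec_diagonal, EuclideanSpace.single_apply, EuclideanSpace.single_apply]
    by_cases hji : j = i <;> simp [hji]
  rw [hv, EuclideanSpace.norm_single, EuclideanSpace.norm_single] at hle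
  simpa [Real.norm_eq_abs] using hle

open Matrix
open scoped Matrix.Norms.L2Operator

/-- Let `V = (V_k, V_k^⊥)` be an orthogonal matrix and `Δ` a real matrix, and let
`S` be the inverse square root of `I + ΔᵀΔ`. Then `Ẑ = (V_k + V_k^⊥ Δ) S` has orthonormal
columns and `‖(V_k^⊥)ᵀ Ẑ‖₂ = ‖Δ‖₂ / √(1 + ‖Δ‖₂²)` (spectral norms). -/
theorem stmt1 (n k m : ℕ) (hnk : n = k + m)
    (Vk : Matrix (Fin n) (Fin k) ℝ) (Vp : Matrix (Fin n) (Fin m) ℝ)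
    (hVk : Vkᵀ * Vk = 1) (hVp : Vpᵀ * Vp = 1) (hVkp : Vkᵀ * Vp = 0)
    (hcomplete : Vk * Vkᵀ + Vp * Vpᵀ = 1)
    (Δ : Matrix (Fin m) (Fin k) ℝ) (S : Matrix (Fin k) (Fin k) ℝ)
    (hSpd : S.PosDef) (hS : S * S = (1 + Δᵀ * Δ)⁻¹)
    (Zhat : Matrix (Fin n) (Fin k) ℝ) (hZ : Zhat = (Vk + Vp * Δ) * S) :
    Zhatᵀ * Zhat = 1 ∧ ‖Vpᵀ * Zhat‖ = ‖Δ‖ / Real.sqrt (1 + ‖Δ‖ ^ 2) := by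
  subst hZ
  have hSt : Sᵀ = S := by
    rw [← Matrix.conjTranspose_eq_transpose_of_trivial]; exact hSpd.isHermitian
  have hΔct : Δᴴ = Δᵀ := Matrix.conjTranspose_eq_transpose_of_trivial Δ
  have hApsd : (Δᵀ * Δ).PosSemidef := by
    rw [← hΔct]; exact Matrix.posSemidef_conjTranspose_mul_self Δ
  have hMpd : ((1 : Matrix (Fin k) (Fin k) ℝ) + Δᵀ * Δ).PosDef :=
    Matrix.PosDef.add_posSemidef Matrix.PosDef.one hApsd
  have hMunit : IsUnit ((1 : Matrix (Fin k) (Fin k) ℝ) + Δᵀ * Δ).det :=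
    hMpd.det_pos.ne'.isUnit
  set M := (1 : Matrix (Fin k) (Fin k) ℝ) + Δᵀ * Δ with hM_def
  have hMM : M * M⁻¹ = 1 := Matrix.mul_nonsing_inv M hMunit
  have hMM' : M⁻¹ * M = 1 := Matrix.nonsing_inv_mul M hMunit
  have hSMinv : S * M⁻¹ = M⁻¹ * S := by rw [← hS, ← Matrix.mul_assoc, Matrix.mul_assoc]
  have hSM : S * M = M * S := by
    calc S * M = M * (M⁻¹ * S) * M := by rw [← Matrix.mul_assoc, hMM, Matrix.one_mul]
      _ = M * (S * M⁻¹) * M := by rw [hSMinv]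
      _ = M * S * (M⁻¹ * M) := by rw [Matrix.mul_assoc, Matrix.mul_assoc, Matrix.mul_assoc]
      _ = M * S := by rw [hMM', Matrix.mul_one]
  have hVpk : Vpᵀ * Vk = 0 := by
    have := congrArg Matrix.transpose hVkp
    simpa [Matrix.transpose_mul] using this
  have e1 : Vkᵀ * (Vp * Δ) = 0 := by rw [← Matrix.mul_assoc, hVkp, Matrix.zero_mul]
  have e2 : Δᵀ * Vpᵀ * Vk = 0 := by rw [Matrix.mul_assoc, hVpk, Matrix.mul_zero]
  have e3 : Δᵀ * Vpᵀ * (Vp * Δ) = Δᵀ * Δ := by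
    rw [Matrix.mul_assoc, ← Matrix.mul_assoc Vpᵀ, hVp, Matrix.one_mul]
  have key : (Vk + Vp * Δ)ᵀ * (Vk + Vp * Δ) = M := by
    rw [Matrix.transpose_add, Matrix.transpose_mul, Matrix.add_mul, Matrix.mul_add,
      Matrix.mul_add, hVk, e1, e2, e3, hM_def]
    abel
  have hSMS : S * M * S = 1 := by
    rw [hSM, Matrix.mul_assoc, hS, hMM]
  have part1 : ((Vk + Vp * Δ) * S)ᵀ * ((Vk + Vp * Δ) * S) = 1 := by
    rw [Matrix.transpose_mul, hSt, Matrix.mul_assoc, ← Matrix.mul_assoc (Vk + Vp * Δ)ᵀ, key,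
      ← Matrix.mul_assoc, hSMS]
  refine ⟨part1, ?_⟩
  -- part 2
  have hB : Vpᵀ * ((Vk + Vp * Δ) * S) = Δ * S := by
    rw [← Matrix.mul_assoc, Matrix.mul_add, hVpk, ← Matrix.mul_assoc, hVp, Matrix.one_mul,
      zero_add]
  rw [hB]
  have hBtB : (Δ * S)ᵀ * (Δ * S) = 1 - M⁻¹ := by
    have h1 : S * (Δᵀ * Δ) * S = S * M * S - S * S := by
      rw [hM_def, Matrix.mul_add, Matrix.add_mul, Matrix.mul_one]
      abel
    rw [Matrix.transpose_mul, hSt, ← Matrix.mul_assoc, Matrix.mul_assoc S Δᵀ Δ, h1, hSMS, hS]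
  -- norms
  have hnB : ‖Δ * S‖ * ‖Δ * S‖ = ‖(1 : Matrix (Fin k) (Fin k) ℝ) - M⁻¹‖ := by
    rw [← Matrix.l2_opNorm_conjTranspose_mul_self,
      Matrix.conjTranspose_eq_transpose_of_trivial, hBtB]
  have hnΔ : ‖Δ‖ * ‖Δ‖ = ‖Δᵀ * Δ‖ := by
    rw [← Matrix.l2_opNorm_conjTranspose_mul_self, hΔct]
  rcases Nat.eq_zero_or_pos k with hk | hk
  · subst hk
    have hΔ0 : Δ = 0 := Subsingleton.elim _ _
    rw [hΔ0]
    simp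
  · haveI : Nonempty (Fin k) := ⟨⟨0, hk⟩⟩
    set hAh := hApsd.1 with hAh_def
    set μ := hAh.eigenvalues with hμ_def
    obtain ⟨i₀, hi₀⟩ := Finite.exists_max μ
    have hμnn : ∀ i, 0 ≤ μ i := hApsd.eigenvalues_nonneg
    set U : Matrix (Fin k) (Fin k) ℝ := (hAh.eigenvectorUnitary : Matrix (Fin k) (Fin k) ℝ)
      with hU_def
    have hUmem : U ∈ unitary (Matrix (Fin k) (Fin k) ℝ) := hAh.eigenvectorUnitary.2
    have hUstar : star U ∈ unitary (Matrix (Fin k) (Fin k) ℝ) := Unitary.star_mem hUmem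
    have hUU : star U * U = 1 := Unitary.star_mul_self_of_mem hUmem
    have hUU' : U * star U = 1 := Unitary.mul_star_self_of_mem hUmem
    have hofReal : (RCLike.ofReal ∘ μ : Fin k → ℝ) = μ := by
      funext i; simp
    have hAdec : Δᵀ * Δ = U * Matrix.diagonal μ * star U := by
      have := hAh.spectral_theorem
      rwa [hofReal] at this
    -- norm of a conjugated diagonal
    have hconj : ∀ d : Fin k → ℝ, ‖U * Matrix.diagonal d * star U‖ = ‖Matrix.diagonal d‖ := by
      intro d
      rw [CStarRing.norm_mul_mem_unitary _ hUstar, CStarRing.norm_mem_unitary_mul _ hUmem]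
    have hdiagval : ∀ (d : Fin k → ℝ) (c : ℝ), 0 ≤ c → (∀ i, 0 ≤ d i) → (∀ i, d i ≤ c) →
        (∃ i, d i = c) → ‖Matrix.diagonal d‖ = c := by
      intro d c hc hnn hle ⟨i, hi⟩
      refine le_antisymm (diag_norm_le d hc fun j => ?_) ?_
      · rw [abs_of_nonneg (hnn j)]; exact hle j
      · calc c = |d i| := by rw [hi.symm, abs_of_nonneg (hnn i)]
          _ ≤ _ := diag_norm_ge d i
    have hnA : ‖Δᵀ * Δ‖ = μ i₀ := by
      rw [hAdec, hconj]
      exact hdiagval μ (μ i₀) (hμnn i₀) hμnn hi₀ ⟨i₀, rfl⟩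
    -- decompose M and its inverse
    have hone : (1 : Matrix (Fin k) (Fin k) ℝ) = U * 1 * star U := by
      rw [Matrix.mul_one, hUU']
    have hMdec : M = U * Matrix.diagonal (fun i => 1 + μ i) * star U := by
      have hd : Matrix.diagonal (fun i => 1 + μ i)
          = 1 + Matrix.diagonal μ := by
        rw [← Matrix.diagonal_one, ← Matrix.diagonal_add]
      rw [hM_def, hd, Matrix.mul_add, Matrix.add_mul, Matrix.mul_one, hUU', ← hAdec]
    have h1μ : ∀ i, (0:ℝ) < 1 + μ i := fun i => by linarith [hμnn i]
    have hmulconj : ∀ d e : Fin k → ℝ,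
        (U * Matrix.diagonal d * star U) * (U * Matrix.diagonal e * star U)
          = U * Matrix.diagonal (fun i => d i * e i) * star U := by
      intro d e
      have hde : Matrix.diagonal d * Matrix.diagonal e
          = Matrix.diagonal (fun i => d i * e i) := Matrix.diagonal_mul_diagonal d e
      calc (U * Matrix.diagonal d * star U) * (U * Matrix.diagonal e * star U)
          = U * (Matrix.diagonal d * ((star U * U) * (Matrix.diagonal e * star U))) := by
            simp only [Matrix.mul_assoc]
        _ = U * (Matrix.diagonal d * (Matrix.diagonal e * star U)) := by
            rw [hUU, Matrix.one_mul]
        _ = U * Matrix.diagonal (fun i => d i * e i) * star U := by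
            rw [← hde]; simp only [Matrix.mul_assoc]
    have hMinv : M⁻¹ = U * Matrix.diagonal (fun i => (1 + μ i)⁻¹) * star U := by
      apply Matrix.inv_eq_right_inv
      rw [hMdec, hmulconj]
      have : (fun i => (1 + μ i) * (1 + μ i)⁻¹) = fun _ : Fin k => (1:ℝ) := by
        funext i; exact mul_inv_cancel₀ (h1μ i).ne'
      rw [this, Matrix.diagonal_one, Matrix.mul_one, hUU']
    have hTdec : (1 : Matrix (Fin k) (Fin k) ℝ) - M⁻¹
        = U * Matrix.diagonal (fun i => 1 - (1 + μ i)⁻¹) * star U := by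
      have hd : Matrix.diagonal (fun i => 1 - (1 + μ i)⁻¹)
          = 1 - Matrix.diagonal (fun i => (1 + μ i)⁻¹) := by
        rw [← Matrix.diagonal_one, ← Matrix.diagonal_sub]
      rw [hMinv, hd, Matrix.mul_sub, Matrix.sub_mul, Matrix.mul_one, hUU']
    have hnT : ‖(1 : Matrix (Fin k) (Fin k) ℝ) - M⁻¹‖ = 1 - (1 + μ i₀)⁻¹ := by
      rw [hTdec, hconj]
      refine hdiagval _ _ ?_ ?_ ?_ ⟨i₀, rfl⟩
      · have : (1 + μ i₀)⁻¹ ≤ 1 := by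
          rw [inv_le_one_iff₀]; right; linarith [hμnn i₀]
        linarith
      · intro i
        have : (1 + μ i)⁻¹ ≤ 1 := by
          rw [inv_le_one_iff₀]; right; linarith [hμnn i]
        linarith
      · intro i
        have : (1 + μ i₀)⁻¹ ≤ (1 + μ i)⁻¹ :=
          inv_anti₀ (h1μ i) (by linarith [hi₀ i])
        linarith
    have hΔΔ : ‖Δ‖ * ‖Δ‖ = μ i₀ := hnΔ.trans hnA
    have hBB : ‖Δ * S‖ * ‖Δ * S‖ = 1 - (1 + μ i₀)⁻¹ := hnB.trans hnT
    have hΔa : ‖Δ‖ = Real.sqrt (μ i₀) := by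
      rw [← hΔΔ, Real.sqrt_mul_self (norm_nonneg _)]
    have h2 : (1:ℝ) + ‖Δ‖^2 = 1 + μ i₀ := by rw [pow_two, hΔΔ]
    have hfrac : (1:ℝ) - (1 + μ i₀)⁻¹ = μ i₀ / (1 + μ i₀) := by
      field_simp [(h1μ i₀).ne']
      ring
    calc ‖Δ * S‖ = Real.sqrt (‖Δ * S‖ * ‖Δ * S‖) :=
          (Real.sqrt_mul_self (norm_nonneg _)).symm
      _ = Real.sqrt (μ i₀ / (1 + μ i₀)) := by rw [hBB, hfrac]
      _ = Real.sqrt (μ i₀) / Real.sqrt (1 + μ i₀) := Real.sqrt_div (hμnn i₀) _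
      _ = ‖Δ‖ / Real.sqrt (1 + ‖Δ‖^2) := by rw [h2, hΔa]
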